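/- There exists an absolute constant c > 0 such that for all integers k > s ≥ 3 and every sufficiently large integer n, f_{s,k}(n) ≥ (c · r_k(n)/n)^{2(s-2)} · n². -/

import Mathlib

open Finset Pointwise

/-- The `k`-term arithmetic progression `{x, x+d, …, x+(k-1)d}` as a finite set. -/
def AP (k : ℕ) (x d : ℤ) : Finset ℤ := (Finset.range k).image (fun i : ℕ => x + (i : ℤ) * d)

/-- A set of integers is `k`-AP free if it contains no nontrivial `k`-term
arithmetic progression. -/
def APFree (k : ℕ) (A : Set ℤ) : Prop :=
  ∀ x d : ℤ, d ≠ 0 → ¬ (↑(AP k x d) : Set ℤ) ⊆ A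

/-- `fAP s A` is the number of nontrivial `s`-term arithmetic progressions contained
in the finite set `A`. -/
noncomputable def fAP (s : ℕ) (A : Finset ℤ) : ℕ :=
  Nat.card {P : Finset ℤ // P ⊆ A ∧ ∃ x d : ℤ, d ≠ 0 ∧ P = AP s x d}

/-- `fsk s k n` is the maximum number of nontrivial `s`-term arithmetic progressions
in a `k`-AP free set of `n` integers. -/
noncomputable def fsk (s k n : ℕ) : ℕ :=
  sSup {m | ∃ A : Finset ℤ, A.card = n ∧ APFree k ↑A ∧ fAP s A = m}

/-- `rk k n` is the size of the largest `k`-AP free subset of `{1, …, n}`. -/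
noncomputable def rk (k n : ℕ) : ℕ :=
  sSup {m | ∃ A : Finset ℤ, A ⊆ Finset.Icc 1 (n : ℤ) ∧ APFree k ↑A ∧ A.card = m}

/-- The partial sumset `A +_G B` along the edge set `E` of a bipartite graph. -/
def partialSumset (E : Finset (ℤ × ℤ)) : Finset ℤ := E.image (fun e => e.1 + e.2)

/-- `pathCount A B E a a'` is the number of (ordered) paths `(a, b, a'', b', a')` of
length four between `a` and `a'` in the bipartite graph with parts `A`, `B` and
edge set `E`. -/
def pathCount (A B : Finset ℤ) (E : Finset (ℤ × ℤ)) (a a' : ℤ) : ℕ :=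
  ((B ×ˢ A ×ˢ B).filter (fun t =>
    (a, t.1) ∈ E ∧ (t.2.1, t.1) ∈ E ∧ (t.2.1, t.2.2) ∈ E ∧ (a', t.2.2) ∈ E)).card

/-! ### Basic lemmas about `AP` -/

lemma mem_AP_iff {k : ℕ} {x d y : ℤ} : y ∈ AP k x d ↔ ∃ i : ℕ, i < k ∧ y = x + (i : ℤ) * d := by
  simp [AP, eq_comm]

lemma AP_coe_subset_iff {k : ℕ} {x d : ℤ} {A : Set ℤ} :
    (↑(AP k x d) : Set ℤ) ⊆ A ↔ ∀ i : ℕ, i < k → (x + (i : ℤ) * d) ∈ A := by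
  constructor
  · intro h i hi
    exact h (Finset.mem_coe.2 (mem_AP_iff.2 ⟨i, hi, rfl⟩))
  · intro h y hy
    rw [Finset.mem_coe, mem_AP_iff] at hy
    obtain ⟨i, hi, rfl⟩ := hy
    exact h i hi

lemma AP_subset_finset_iff {k : ℕ} {x d : ℤ} {A : Finset ℤ} :
    AP k x d ⊆ A ↔ ∀ i : ℕ, i < k → (x + (i : ℤ) * d) ∈ A := by
  rw [← Finset.coe_subset]
  exact AP_coe_subset_iff

lemma apFree_iff {k : ℕ} {A : Set ℤ} :
    APFree k A ↔ ∀ x d : ℤ, d ≠ 0 → ¬ (∀ i : ℕ, i < k → (x + (i : ℤ) * d) ∈ A) := by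
  unfold APFree
  constructor
  · intro h x d hd hall
    exact h x d hd (AP_coe_subset_iff.2 hall)
  · intro h x d hd hsub
    exact h x d hd (AP_coe_subset_iff.1 hsub)

/-- To prove `APFree` it suffices to consider positive common differences. -/
lemma apFree_of_pos {k : ℕ} {A : Set ℤ}
    (h : ∀ x d : ℤ, 0 < d → ¬ (∀ i : ℕ, i < k → (x + (i : ℤ) * d) ∈ A)) :
    APFree k A := by
  rw [apFree_iff]
  intro x d hd hall
  rcases lt_or_gt_of_ne hd with hneg | hpos
  · refine h (x + (k - 1 : ℤ) * d) (-d) (by linarith) ?_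
    intro i hi
    have hx : x + ((k : ℤ) - 1) * d + (i : ℤ) * (-d) = x + ((k - 1 - i : ℕ) : ℤ) * d := by
      have hik : (i : ℤ) ≤ (k : ℤ) - 1 := by
        have : (i : ℤ) < (k : ℤ) := by exact_mod_cast hi
        linarith
      have : ((k - 1 - i : ℕ) : ℤ) = (k : ℤ) - 1 - (i : ℤ) := by
        have h1 : i ≤ k - 1 := by omega
        have h2 : 1 ≤ k := by omega
        push_cast [Nat.cast_sub h1, Nat.cast_sub h2]
        ring
      rw [this]; ring
    rw [hx]
    exact hall _ (by omega)
  · exact h x d hpos hall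

lemma APFree.mono {k : ℕ} {A B : Set ℤ} (hAB : A ⊆ B) (h : APFree k B) : APFree k A := by
  rw [apFree_iff] at h ⊢
  intro x d hd hall
  exact h x d hd (fun i hi => hAB (hall i hi))

lemma APFree.translate {k : ℕ} {A : Finset ℤ} (h : APFree k (↑A : Set ℤ)) (c : ℤ) :
    APFree k (↑(A.image (· + c)) : Set ℤ) := by
  rw [apFree_iff] at h ⊢
  intro x d hd hall
  refine h (x - c) d hd ?_
  intro i hi
  have := hall i hi
  simp only [Finset.coe_image, Set.mem_image, Finset.mem_coe] at this
  obtain ⟨a, ha, hax⟩ := this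
  have : a = x - c + (i : ℤ) * d := by omega
  rwa [← this]

lemma card_AP {s : ℕ} {x d : ℤ} (hd : d ≠ 0) : (AP s x d).card = s := by
  rw [AP, Finset.card_image_of_injective _ ?_, Finset.card_range]
  intro a b hab
  simp only at hab
  have : (a : ℤ) * d = (b : ℤ) * d := by linarith
  have : (a : ℤ) = b := mul_right_cancel₀ hd this
  exact_mod_cast this

lemma AP_min {s : ℕ} {x d : ℤ} (hs : 0 < s) (hd : 0 < d) (y : ℤ) (hy : y ∈ AP s x d) :
    x ≤ y := by
  rw [mem_AP_iff] at hy
  obtain ⟨i, _, rfl⟩ := hy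
  nlinarith [Int.natCast_nonneg i]

lemma AP_mem_self {s : ℕ} (hs : 0 < s) (x d : ℤ) : x ∈ AP s x d := by
  rw [mem_AP_iff]; exact ⟨0, hs, by simp⟩

lemma AP_mem_last {s : ℕ} (hs : 0 < s) (x d : ℤ) : x + ((s : ℤ) - 1) * d ∈ AP s x d := by
  rw [mem_AP_iff]
  refine ⟨s - 1, by omega, ?_⟩
  congr 1
  have : ((s - 1 : ℕ) : ℤ) = (s : ℤ) - 1 := by
    have : 1 ≤ s := hs
    push_cast [Nat.cast_sub this]; ring
  rw [this]

lemma AP_max {s : ℕ} {x d : ℤ} (hs : 0 < s) (hd : 0 < d) (y : ℤ) (hy : y ∈ AP s x d) :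
    y ≤ x + ((s : ℤ) - 1) * d := by
  rw [mem_AP_iff] at hy
  obtain ⟨i, hi, rfl⟩ := hy
  have : (i : ℤ) ≤ (s : ℤ) - 1 := by
    have : (i : ℤ) < (s : ℤ) := by exact_mod_cast hi
    linarith
  nlinarith

/-- An AP finset with positive difference determines its parameters. -/
lemma AP_inj {s : ℕ} (hs : 2 ≤ s) {x d x' d' : ℤ} (hd : 0 < d) (hd' : 0 < d')
    (h : AP s x d = AP s x' d') : x = x' ∧ d = d' := by
  have h0 : 0 < s := by omega
  have hxx : x = x' := by
    have h1 : x ≤ x' := AP_min h0 hd _ (h ▸ AP_mem_self h0 x' d')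
    have h2 : x' ≤ x := AP_min h0 hd' _ (h ▸ AP_mem_self h0 x d) -- careful direction
    omega
  have hmax1 : x + ((s:ℤ) - 1) * d ≤ x' + ((s:ℤ)-1) * d' :=
    AP_max h0 hd' _ (h ▸ AP_mem_last h0 x d)
  have hmax2 : x' + ((s:ℤ) - 1) * d' ≤ x + ((s:ℤ)-1) * d :=
    AP_max h0 hd _ (h.symm ▸ AP_mem_last h0 x' d')
  have hs1 : (1 : ℤ) ≤ (s : ℤ) - 1 := by
    have : (2 : ℤ) ≤ (s : ℤ) := by exact_mod_cast hs
    linarith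
  constructor
  · exact hxx
  · nlinarith

/-! ### Unions of spaced blocks -/

/-- A union of at most `k-1` equally spaced translates of `k`-AP-free sets is `k`-AP-free,
provided the spacing exceeds four times the width of the blocks. -/
lemma blocks_free {k : ℕ} (hk3 : 3 ≤ k) (L : ℕ → Finset ℤ) (t : ℕ) (ht : t ≤ k - 1)
    (M S : ℤ) (hM : 0 ≤ M) (hS : 4 * M + 1 ≤ S)
    (hL : ∀ j, j < t → ∀ y ∈ L j, -M ≤ y ∧ y ≤ M)
    (hfree : ∀ j, j < t → APFree k (↑(L j) : Set ℤ)) :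
    APFree k (↑((Finset.range t).biUnion (fun j => (L j).image (· + (j : ℤ) * S))) : Set ℤ) := by
  apply apFree_of_pos
  intro x d hd hall
  have H : ∀ i : ℕ, i < k → ∃ j : ℕ, j < t ∧ ∃ u : ℤ, u ∈ L j ∧ x + (i : ℤ) * d = u + (j : ℤ) * S := by
    intro i hi
    have := hall i hi
    simp only [Finset.coe_biUnion, Finset.coe_image, Set.mem_iUnion, Finset.mem_coe,
      Finset.mem_range, Set.mem_image] at this
    obtain ⟨j, hjt, u, hu, he⟩ := this
    exact ⟨j, hjt, u, hu, he.symm⟩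
  choose! j hjt u hu he using H
  -- the step in the block indices is constant
  have hstep : ∀ i : ℕ, i + 1 < k →
      d - ((j (i+1) : ℤ) - (j i : ℤ)) * S = u (i+1) - u i := by
    intro i hi
    have h1 := he i (by omega)
    have h2 := he (i+1) hi
    have : x + ((i : ℤ) + 1) * d = u (i+1) + (j (i+1) : ℤ) * S := by
      have : ((i + 1 : ℕ) : ℤ) = (i : ℤ) + 1 := by push_cast; ring
      rw [← this]; exact h2
    nlinarith [this, h1]
  have hq : ∀ i : ℕ, i + 1 < k → (j (i+1) : ℤ) - (j i : ℤ) = (j 1 : ℤ) - (j 0 : ℤ) := by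
    intro i hi
    set q1 : ℤ := (j (i+1) : ℤ) - (j i : ℤ) with hq1
    set q0 : ℤ := (j 1 : ℤ) - (j 0 : ℤ) with hq0
    have e1 := hstep i hi
    have e0 := hstep 0 (by omega)
    have hb1 : -M ≤ u (i+1) ∧ u (i+1) ≤ M := hL _ (hjt _ hi) _ (hu _ hi)
    have hb2 : -M ≤ u i ∧ u i ≤ M := hL _ (hjt _ (by omega)) _ (hu _ (by omega))
    have hb3 : -M ≤ u 1 ∧ u 1 ≤ M := hL _ (hjt _ (by omega)) _ (hu _ (by omega))
    have hb4 : -M ≤ u 0 ∧ u 0 ≤ M := hL _ (hjt _ (by omega)) _ (hu _ (by omega))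
    -- |d - q1 S| ≤ 2M and |d - q0 S| ≤ 2M hence (q1-q0) S ∈ [-4M,4M], so q1 = q0
    by_contra hne
    rcases lt_or_gt_of_ne hne with hlt | hgt
    · have h1 : q0 - q1 ≥ 1 := by omega
      have : (q0 - q1) * S ≥ 1 * S := by
        apply mul_le_mul_of_nonneg_right h1 (by linarith)
      nlinarith
    · have h1 : q1 - q0 ≥ 1 := by omega
      have : (q1 - q0) * S ≥ 1 * S := by
        apply mul_le_mul_of_nonneg_right h1 (by linarith)
      nlinarith
  set q : ℤ := (j 1 : ℤ) - (j 0 : ℤ) with hqdef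
  have hlin : ∀ i : ℕ, i < k → (j i : ℤ) = (j 0 : ℤ) + (i : ℤ) * q := by
    intro i
    induction i with
    | zero => intro _; simp
    | succ i ih =>
      intro hi
      have h1 := ih (by omega)
      have h2 := hq i hi
      push_cast
      have : (j (i+1) : ℤ) = (j i : ℤ) + q := by omega
      rw [this, h1]; ring
  by_cases hq0 : q = 0
  -- all blocks equal, AP inside one block
  · have hconst : ∀ i : ℕ, i < k → j i = j 0 := by
      intro i hi
      have := hlin i hi
      rw [hq0] at this
      have : (j i : ℤ) = (j 0 : ℤ) := by linarith
      exact_mod_cast this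
    have hj0 : j 0 < t := hjt 0 (by omega)
    refine (apFree_iff.1 (hfree (j 0) hj0)) (x - (j 0 : ℤ) * S) d (by positivity) ?_
    intro i hi
    have h1 := he i hi
    have h2 := hconst i hi
    have : x - (j 0 : ℤ) * S + (i : ℤ) * d = u i := by rw [← h2]; linarith [h1]
    rw [this]
    exact Finset.mem_coe.2 (h2 ▸ hu i hi)
  -- nonzero slope: too many distinct blocks
  · have hk1 : k - 1 < k := by omega
    have hlast := hlin (k-1) hk1
    have hcast : ((k - 1 : ℕ) : ℤ) = (k : ℤ) - 1 := by
      have : 1 ≤ k := by omega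
      push_cast [Nat.cast_sub this]; ring
    rw [hcast] at hlast
    have hb0 : (j 0 : ℤ) ≤ (t : ℤ) - 1 := by
      have := hjt 0 (by omega)
      have : (j 0 : ℤ) < (t : ℤ) := by exact_mod_cast this
      linarith
    have hbl : 0 ≤ (j (k-1) : ℤ) := Int.natCast_nonneg _
    have hbl2 : (j (k-1) : ℤ) ≤ (t : ℤ) - 1 := by
      have := hjt (k-1) hk1
      have : (j (k-1) : ℤ) < (t : ℤ) := by exact_mod_cast this
      linarith
    have hb02 : 0 ≤ (j 0 : ℤ) := Int.natCast_nonneg _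
    have htk : (t : ℤ) ≤ (k : ℤ) - 1 := by
      have h1 : (t : ℤ) ≤ ((k - 1 : ℕ) : ℤ) := by exact_mod_cast ht
      rw [hcast] at h1; exact h1
    have hkpos : (3 : ℤ) ≤ (k : ℤ) := by exact_mod_cast hk3
    rcases lt_or_gt_of_ne hq0 with hneg | hpos
    · have hq1 : q ≤ -1 := by omega
      have : ((k : ℤ) - 1) * q ≤ ((k : ℤ) - 1) * (-1) := by
        apply mul_le_mul_of_nonneg_left hq1 (by linarith)
      linarith
    · have hq1 : 1 ≤ q := by omega
      have : ((k : ℤ) - 1) * 1 ≤ ((k : ℤ) - 1) * q := by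
        apply mul_le_mul_of_nonneg_left hq1 (by linarith)
      linarith
/-! ### Geometric unions -/

lemma four_pow_pos (i : ℕ) : (0 : ℤ) < 4 ^ i := by positivity

lemma four_pow_mono {i i' : ℕ} (h : i ≤ i') : (4 : ℤ) ^ i ≤ 4 ^ i' :=
  pow_le_pow_right₀ (by norm_num) h

lemma four_pow_one_le (i : ℕ) : (1 : ℤ) ≤ 4 ^ i := four_pow_pos i

/-- A union of translates of `k`-AP-free sets at geometrically growing positions is
`k`-AP-free. -/
lemma geom_free {k : ℕ} (hk3 : 3 ≤ k) (C : ℕ → Finset ℤ) (m : ℕ) (WB G : ℤ)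
    (hWB : 1 ≤ WB) (hG : (2 * (k : ℤ) + 2) * WB + 1 ≤ G)
    (hC : ∀ i, i < m → ∀ y ∈ C i, 0 ≤ y ∧ y < WB)
    (hfree : ∀ i, i < m → APFree k (↑(C i) : Set ℤ)) :
    APFree k (↑((Finset.range m).biUnion fun i => (C i).image (· + G * 4 ^ i)) : Set ℤ) := by
  have hkZ : (3 : ℤ) ≤ (k : ℤ) := by exact_mod_cast hk3
  have hkWB : 3 * WB ≤ (k:ℤ) * WB := mul_le_mul_of_nonneg_right hkZ (by linarith)
  have hkWB0 : 0 ≤ (k:ℤ) * WB := by linarith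
  have hG0 : 0 < G := by linarith
  apply apFree_of_pos
  intro x d hd hall
  have H : ∀ i : ℕ, i < k → ∃ c : ℕ, c < m ∧ ∃ u : ℤ, u ∈ C c ∧ x + (i : ℤ) * d = u + G * 4 ^ c := by
    intro i hi
    have := hall i hi
    simp only [Finset.coe_biUnion, Finset.coe_image, Set.mem_iUnion, Finset.mem_coe,
      Finset.mem_range, Set.mem_image] at this
    obtain ⟨c, hcm, u, hu, he⟩ := this
    exact ⟨c, hcm, u, hu, he.symm⟩
  choose! c hcm u hu he using H
  have hbound : ∀ i : ℕ, i < k → 0 ≤ u i ∧ u i < WB := fun i hi => hC _ (hcm i hi) _ (hu i hi)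
  have hlow : ∀ i : ℕ, i < k → G * 4 ^ (c i) ≤ x + (i : ℤ) * d := by
    intro i hi; have := he i hi; have := (hbound i hi).1; linarith
  have hhigh : ∀ i : ℕ, i < k → x + (i : ℤ) * d < G * 4 ^ (c i) + WB := by
    intro i hi; have := he i hi; have := (hbound i hi).2; linarith
  -- monotonicity of blocks
  have hmono : ∀ i i' : ℕ, i < k → i' < k → (i : ℤ) * d < (i' : ℤ) * d → c i ≤ c i' := by
    intro i i' hi hi' hlt
    by_contra hcc
    push_neg at hcc
    have h4 : (4:ℤ) ^ (c i') ≤ 4 ^ (c i - 1) := four_pow_mono (by omega)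
    have h4' : (4:ℤ) ^ (c i - 1) * 4 = 4 ^ (c i) := by
      rw [← pow_succ]; congr 1; omega
    have hT0 : 0 < G * 4 ^ (c i - 1) := by positivity
    have e4 : G * 4 ^ (c i) = 4 * (G * 4 ^ (c i - 1)) := by rw [← h4']; ring
    have hup : G * 4 ^ (c i') ≤ G * 4 ^ (c i - 1) :=
      mul_le_mul_of_nonneg_left h4 (le_of_lt hG0)
    have hTG : G ≤ G * 4 ^ (c i - 1) :=
      le_mul_of_one_le_right (le_of_lt hG0) (four_pow_one_le _)
    have l1 := hlow i hi
    have l2 := hhigh i' hi'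
    linarith
  have hk1 : k - 1 < k := by omega
  have hk2 : k - 2 < k := by omega
  have hk3' : k - 3 < k := by omega
  have hcast1 : ((k - 1 : ℕ) : ℤ) = (k : ℤ) - 1 := by push_cast [Nat.cast_sub (by omega : 1 ≤ k)]; ring
  have hcast2 : ((k - 2 : ℕ) : ℤ) = (k : ℤ) - 2 := by push_cast [Nat.cast_sub (by omega : 2 ≤ k)]; ring
  have hcast3 : ((k - 3 : ℕ) : ℤ) = (k : ℤ) - 3 := by push_cast [Nat.cast_sub (by omega : 3 ≤ k)]; ring
  have hba : c (k-2) ≤ c (k-1) := by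
    apply hmono (k-2) (k-1) hk2 hk1
    rw [hcast1, hcast2]; linarith
  rcases eq_or_lt_of_le hba with hbaeq | hbalt
  · -- same block: all terms in block `c (k-1)`
    have hdWB : d < WB := by
      have l1 := hlow (k-2) hk2
      have l2 := hhigh (k-1) hk1
      rw [hcast2] at l1
      rw [hcast1] at l2
      rw [hbaeq] at l1
      linarith
    have hall_a : ∀ i : ℕ, i < k → c i = c (k-1) := by
      intro i hi
      have hik : (i:ℤ) ≤ (k:ℤ) - 1 := by
        have : (i:ℤ) < (k:ℤ) := by exact_mod_cast hi
        linarith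
      have hile : c i ≤ c (k-1) := by
        rcases eq_or_lt_of_le (Nat.le_of_lt_succ (by omega : i < k - 1 + 1)) with h | h
        · rw [h]
        · apply hmono i (k-1) hi hk1
          rw [hcast1]
          have hik' : (i : ℤ) < (k:ℤ) - 1 := by
            have := (Int.ofNat_lt.2 h)
            push_cast at this ⊢
            omega
          have : 0 < ((k:ℤ) - 1 - (i:ℤ)) * d := mul_pos (by linarith) hd
          linarith
      rcases eq_or_lt_of_le hile with h | h
      · exact h
      · exfalso
        have l1 : x + (i:ℤ) * d < G * 4 ^ (c i) + WB := hhigh i hi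
        have l2 : G * 4 ^ (c (k-1)) ≤ x + ((k:ℤ) - 1) * d := by
          have := hlow (k-1) hk1; rwa [hcast1] at this
        have hiZ : (0:ℤ) ≤ (i:ℤ) := Int.natCast_nonneg i
        have hiWB : (i:ℤ) ≤ (i:ℤ) * WB := le_mul_of_one_le_right hiZ hWB
        have hdle : d ≤ WB - 1 := by omega
        have hfac : ((k:ℤ) - 1 - (i:ℤ)) * d ≤ ((k:ℤ) - 1 - (i:ℤ)) * (WB - 1) :=
          mul_le_mul_of_nonneg_left hdle (by linarith)
        have hgap : x + ((k:ℤ) - 1) * d - (x + (i:ℤ) * d) < (k:ℤ) * WB := by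
          have expand : ((k:ℤ) - 1 - (i:ℤ)) * (WB - 1)
              = (k:ℤ) * WB - (k:ℤ) - (i:ℤ) * WB + (i:ℤ) - WB + 1 := by ring
          have expand2 : x + ((k:ℤ) - 1) * d - (x + (i:ℤ) * d) = ((k:ℤ) - 1 - (i:ℤ)) * d := by ring
          rw [expand2]
          rw [expand] at hfac
          linarith
        have h4 : (4:ℤ) ^ (c i) ≤ 4 ^ (c (k-1) - 1) := four_pow_mono (by omega)
        have h4' : (4:ℤ) ^ (c (k-1) - 1) * 4 = 4 ^ (c (k-1)) := by
          rw [← pow_succ]; congr 1; omega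
        have hT0 : 0 < G * 4 ^ (c (k-1) - 1) := by positivity
        have e4 : G * 4 ^ (c (k-1)) = 4 * (G * 4 ^ (c (k-1) - 1)) := by rw [← h4']; ring
        have hup : G * 4 ^ (c i) ≤ G * 4 ^ (c (k-1) - 1) :=
          mul_le_mul_of_nonneg_left h4 (le_of_lt hG0)
        have hTG : G ≤ G * 4 ^ (c (k-1) - 1) :=
          le_mul_of_one_le_right (le_of_lt hG0) (four_pow_one_le _)
        linarith
    have ham : c (k-1) < m := hcm (k-1) hk1
    refine (apFree_iff.1 (hfree (c (k-1)) ham)) (x - G * 4 ^ (c (k-1))) d (by positivity) ?_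
    intro i hi
    have h1 := he i hi
    have h2 := hall_a i hi
    have : x - G * 4 ^ (c (k-1)) + (i:ℤ) * d = u i := by rw [← h2]; linarith
    rw [this]
    exact Finset.mem_coe.2 (h2 ▸ hu i hi)
  · -- different blocks: the third-from-top term would be negative
    exfalso
    have l1 : G * 4 ^ (c (k-1)) ≤ x + ((k:ℤ) - 1) * d := by
      have := hlow (k-1) hk1; rwa [hcast1] at this
    have l2 : x + ((k:ℤ) - 2) * d < G * 4 ^ (c (k-2)) + WB := by
      have := hhigh (k-2) hk2; rwa [hcast2] at this
    have l3 : 0 ≤ x + ((k:ℤ) - 3) * d := by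
      have h := hlow (k-3) hk3'
      rw [hcast3] at h
      have hpos : 0 < G * 4 ^ (c (k-3)) := by positivity
      linarith
    have h4 : (4:ℤ) ^ (c (k-2)) ≤ 4 ^ (c (k-1) - 1) := four_pow_mono (by omega)
    have h4' : (4:ℤ) ^ (c (k-1) - 1) * 4 = 4 ^ (c (k-1)) := by
      rw [← pow_succ]; congr 1; omega
    have hT0 : 0 < G * 4 ^ (c (k-1) - 1) := by positivity
    have e4 : G * 4 ^ (c (k-1)) = 4 * (G * 4 ^ (c (k-1) - 1)) := by rw [← h4']; ring
    have hup : G * 4 ^ (c (k-2)) ≤ G * 4 ^ (c (k-1) - 1) :=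
      mul_le_mul_of_nonneg_left h4 (le_of_lt hG0)
    have hTG : G ≤ G * 4 ^ (c (k-1) - 1) :=
      le_mul_of_one_le_right (le_of_lt hG0) (four_pow_one_le _)
    linarith

/-- Cardinality of a union of separated translated blocks. -/
lemma card_biUnion_translates' (lo : ℤ) (C : ℕ → Finset ℤ) (p : ℕ → ℤ) (WB : ℤ) (m : ℕ)
    (hC : ∀ i, i < m → ∀ y ∈ C i, lo ≤ y ∧ y < lo + WB)
    (hp : ∀ i i' : ℕ, i < i' → i' < m → p i + WB ≤ p i') :
    ((Finset.range m).biUnion fun i => (C i).image (· + p i)).card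
      = ∑ i ∈ Finset.range m, (C i).card := by
  rw [Finset.card_biUnion]
  · refine Finset.sum_congr rfl (fun i _ => ?_)
    exact Finset.card_image_of_injective _ (add_left_injective _)
  · intro i hi i' hi' hne
    simp only [Finset.mem_coe, Finset.mem_range] at hi hi'
    have key : ∀ a b : ℕ, a < b → b < m →
        Disjoint ((C a).image (· + p a)) ((C b).image (· + p b)) := by
      intro a b hab hbm
      rw [Finset.disjoint_left]
      intro y hy hy'
      simp only [Finset.mem_image] at hy hy'
      obtain ⟨z, hz, rfl⟩ := hy
      obtain ⟨z', hz', hzz⟩ := hy'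
      have b1 := hC a (lt_trans hab hbm) z hz
      have b2 := hC b hbm z' hz'
      have := hp a b hab hbm
      omega
    rcases Ne.lt_or_gt hne with h | h
    · exact key i i' h hi'
    · exact (key i' i h hi).symm
lemma card_biUnion_translates (C : ℕ → Finset ℤ) (p : ℕ → ℤ) (WB : ℤ) (m : ℕ)
    (hC : ∀ i, i < m → ∀ y ∈ C i, 0 ≤ y ∧ y < WB)
    (hp : ∀ i i' : ℕ, i < i' → i' < m → p i + WB ≤ p i') :
    ((Finset.range m).biUnion fun i => (C i).image (· + p i)).card
      = ∑ i ∈ Finset.range m, (C i).card := by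
  apply card_biUnion_translates' 0 C p WB m
  · intro i hi y hy
    have := hC i hi y hy
    omega
  · exact hp

/-! ### Averaging / capture lemmas -/

lemma exists_translate_capture (Q : Finset (ℤ × ℤ)) (f : ℤ × ℤ → ℤ) (Bs T : Finset ℤ)
    (h : ∀ p ∈ Q, ∀ b ∈ Bs, f p - b ∈ T) (hT : T.Nonempty) :
    ∃ τ ∈ T, Q.card * Bs.card ≤ (Q.filter fun p => f p - τ ∈ Bs).card * T.card := by
  classical
  have hsum : Q.card * Bs.card ≤ ∑ τ ∈ T, (Q.filter fun p => f p - τ ∈ Bs).card := by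
    have e1 : ∑ τ ∈ T, (Q.filter fun p => f p - τ ∈ Bs).card
        = ∑ p ∈ Q, (T.filter fun τ => f p - τ ∈ Bs).card := by
      simp_rw [Finset.card_filter]
      rw [Finset.sum_comm]
    rw [e1]
    have hinner : ∀ p ∈ Q, Bs.card ≤ (T.filter fun τ => f p - τ ∈ Bs).card := by
      intro p hp
      apply Finset.card_le_card_of_injOn (fun b => f p - b)
      · intro b hb
        simp only [Finset.coe_filter, Set.mem_setOf_eq, Finset.mem_coe, Finset.mem_filter]
        refine ⟨h p hp b hb, ?_⟩
        simpa using hb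
      · intro b₁ _ b₂ _ hbe
        simp only at hbe
        omega
    calc Q.card * Bs.card = ∑ _p ∈ Q, Bs.card := by rw [Finset.sum_const, smul_eq_mul]
    _ ≤ ∑ p ∈ Q, (T.filter fun τ => f p - τ ∈ Bs).card := Finset.sum_le_sum hinner
  by_contra hcon
  push_neg at hcon
  have : ∑ τ ∈ T, (Q.filter fun p => f p - τ ∈ Bs).card * T.card
      < ∑ _τ ∈ T, Q.card * Bs.card := by
    apply Finset.sum_lt_sum_of_nonempty hT
    intro τ hτ
    exact hcon τ hτ
  rw [Finset.sum_const, smul_eq_mul, ← Finset.sum_mul] at this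
  have h2 : Q.card * Bs.card * T.card ≤ (∑ τ ∈ T, (Q.filter fun p => f p - τ ∈ Bs).card) * T.card := by
    exact Nat.mul_le_mul_right _ hsum
  have hTpos : 0 < T.card := Finset.card_pos.2 hT
  nlinarith

/-- Iterated capture: a large set of pairs whose middle values all lie in translates of `Bs`. -/
lemma capture_chain (Bh Bs T : Finset ℤ) (hT : T.Nonempty) (s : ℕ)
    (hcompat : ∀ j : ℕ, 2 ≤ j → j < s → ∀ p ∈ Bh ×ˢ Bh, ∀ b ∈ Bs,
      p.1 + (j : ℤ) * (p.2 - p.1) - b ∈ T) :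
    ∀ t : ℕ, 2 + t ≤ s → ∃ τ : ℕ → ℤ, (∀ j, 2 ≤ j → j < 2 + t → τ j ∈ T) ∧
      ∃ Q : Finset (ℤ × ℤ), Q ⊆ Bh ×ˢ Bh ∧
        (∀ p ∈ Q, ∀ j, 2 ≤ j → j < 2 + t → p.1 + (j : ℤ) * (p.2 - p.1) - τ j ∈ Bs) ∧
        Bh.card ^ 2 * Bs.card ^ t ≤ Q.card * T.card ^ t := by
  intro t
  induction t with
  | zero =>
    intro _
    refine ⟨fun _ => 0, by omega, Bh ×ˢ Bh, le_refl _, by omega, ?_⟩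
    rw [Finset.card_product]
    ring_nf
    omega
  | succ t ih =>
    intro hts
    obtain ⟨τ, hτT, Q, hQsub, hQmid, hQcard⟩ := ih (by omega)
    obtain ⟨τs, hτsT, hcap⟩ := exists_translate_capture Q
        (fun p => p.1 + ((2 + t : ℕ) : ℤ) * (p.2 - p.1)) Bs T
        (fun p hp b hb => hcompat (2 + t) (by omega) (by omega) p (hQsub hp) b hb) hT
    refine ⟨Function.update τ (2 + t) τs, ?_, Q.filter
      (fun p => p.1 + ((2 + t : ℕ) : ℤ) * (p.2 - p.1) - τs ∈ Bs), ?_, ?_, ?_⟩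
    · intro j hj2 hjlt
      by_cases hje : j = 2 + t
      · rw [hje, Function.update_self]; exact hτsT
      · rw [Function.update_of_ne hje]; exact hτT j hj2 (by omega)
    · exact Finset.Subset.trans (Finset.filter_subset _ _) hQsub
    · intro p hp j hj2 hjlt
      rw [Finset.mem_filter] at hp
      by_cases hje : j = 2 + t
      · rw [hje, Function.update_self]
        exact hp.2
      · rw [Function.update_of_ne hje]
        exact hQmid p hp.1 j hj2 (by omega)
    · calc Bh.card ^ 2 * Bs.card ^ (t + 1)
          = (Bh.card ^ 2 * Bs.card ^ t) * Bs.card := by ring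
      _ ≤ (Q.card * T.card ^ t) * Bs.card := Nat.mul_le_mul_right _ hQcard
      _ = (Q.card * Bs.card) * T.card ^ t := by ring
      _ ≤ ((Q.filter (fun p => p.1 + ((2 + t : ℕ) : ℤ) * (p.2 - p.1) - τs ∈ Bs)).card * T.card)
            * T.card ^ t := Nat.mul_le_mul_right _ hcap
      _ = _ := by ring

/-! ### A dense window -/

lemma exists_dense_window (B : Finset ℤ) (n W : ℕ) (hW : 0 < W) (hWn : W ≤ n)
    (hB : B ⊆ Finset.Icc 1 (n : ℤ)) :
    ∃ x₀ : ℤ, B.card * W ≤ (B.filter (fun y => x₀ ≤ y ∧ y < x₀ + (W : ℤ))).card * (2 * n) := by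
  classical
  set Cn := n / W + 1 with hCn
  have hdm : W * (n / W) + n % W = n := Nat.div_add_mod n W
  have hmod : n % W < W := Nat.mod_lt _ hW
  have hCnW : n < Cn * W := by
    have he : Cn * W = W * (n / W) + W := by rw [hCn]; ring
    omega
  have hCnle : Cn * W ≤ 2 * n := by
    have he : Cn * W = W * (n / W) + W := by rw [hCn]; ring
    omega
  have hW0 : (0:ℤ) < (W:ℤ) := by exact_mod_cast hW
  have hcover : B ⊆ (Finset.range Cn).biUnion
      (fun i => B.filter (fun y => (1 + i * W : ℤ) ≤ y ∧ y < 1 + i * W + (W:ℤ))) := by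
    intro y hy
    have hy' := hB hy
    rw [Finset.mem_Icc] at hy'
    have hy1 : 1 ≤ y := hy'.1
    have hyn : y ≤ (n : ℤ) := hy'.2
    have hWne : (W:ℤ) ≠ 0 := by positivity
    set iZ : ℤ := (y - 1) / W with hiZ
    have hdm2 : (W:ℤ) * iZ + (y-1) % W = y - 1 := Int.mul_ediv_add_emod (y-1) W
    have hr1 : 0 ≤ (y-1) % (W:ℤ) := Int.emod_nonneg _ hWne
    have hr2 : (y-1) % (W:ℤ) < W := Int.emod_lt_of_pos _ hW0
    have hiZ0 : 0 ≤ iZ := Int.ediv_nonneg (by omega) (by positivity)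
    set i : ℕ := iZ.toNat with hi
    have hicast : (i : ℤ) = iZ := Int.toNat_of_nonneg hiZ0
    have hiy : (i:ℤ) * W ≤ y - 1 := by rw [hicast]; linarith
    have hiy2 : y - 1 < (i:ℤ)*W + W := by rw [hicast]; linarith
    have hiCn : i < Cn := by
      by_contra hic
      push_neg at hic
      have h1 : (Cn:ℤ) ≤ (i:ℤ) := by exact_mod_cast hic
      have h2 : (Cn:ℤ) * W ≤ (i:ℤ) * W := mul_le_mul_of_nonneg_right h1 (le_of_lt hW0)
      have h3 : (n:ℤ) < (Cn:ℤ) * (W:ℤ) := by exact_mod_cast hCnW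
      linarith
    rw [Finset.mem_biUnion]
    refine ⟨i, Finset.mem_range.2 hiCn, ?_⟩
    rw [Finset.mem_filter]
    exact ⟨hy, by linarith, by linarith⟩
  have hsum : B.card ≤ ∑ i ∈ Finset.range Cn,
      (B.filter (fun y => (1 + i * W : ℤ) ≤ y ∧ y < 1 + i * W + (W:ℤ))).card :=
    le_trans (Finset.card_le_card hcover) (Finset.card_biUnion_le)
  have hCnpos : 0 < Cn := by rw [hCn]; exact Nat.succ_pos _
  have hex : ∃ i ∈ Finset.range Cn, B.card ≤ Cn *
      (B.filter (fun y => (1 + i * W : ℤ) ≤ y ∧ y < 1 + i * W + (W:ℤ))).card := by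
    by_contra hcon
    push_neg at hcon
    have hlt : ∑ i ∈ Finset.range Cn,
        Cn * (B.filter (fun y => (1 + i * W : ℤ) ≤ y ∧ y < 1 + i * W + (W:ℤ))).card
        < ∑ _i ∈ Finset.range Cn, B.card := by
      apply Finset.sum_lt_sum_of_nonempty ⟨0, Finset.mem_range.2 hCnpos⟩
      intro i hi
      exact hcon i hi
    rw [Finset.sum_const, Finset.card_range, smul_eq_mul, ← Finset.mul_sum] at hlt
    have h2 : Cn * B.card ≤ Cn * (∑ i ∈ Finset.range Cn,
        (B.filter (fun y => (1 + i * W : ℤ) ≤ y ∧ y < 1 + i * W + (W:ℤ))).card) :=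
      Nat.mul_le_mul_left _ hsum
    exact absurd (lt_of_le_of_lt h2 hlt) (lt_irrefl _)
  obtain ⟨i, _, hbest⟩ := hex
  refine ⟨1 + i * W, ?_⟩
  calc B.card * W ≤ Cn * (B.filter (fun y => (1 + i * W : ℤ) ≤ y ∧ y < 1 + i * W + (W:ℤ))).card * W :=
        Nat.mul_le_mul_right _ hbest
  _ = (B.filter (fun y => (1 + i * W : ℤ) ≤ y ∧ y < 1 + i * W + (W:ℤ))).card * (Cn * W) := by ring
  _ ≤ (B.filter (fun y => (1 + i * W : ℤ) ≤ y ∧ y < 1 + i * W + (W:ℤ))).card * (2 * n) :=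
        Nat.mul_le_mul_left _ hCnle
/-! ### Plumbing for `fAP`, `fsk`, `rk` -/

open scoped Classical

lemma apFree_empty {k : ℕ} (hk : 1 ≤ k) : APFree k (↑(∅ : Finset ℤ) : Set ℤ) := by
  rw [apFree_iff]
  intro x d _ hall
  simpa using hall 0 (by omega)

lemma apFree_singleton {k : ℕ} (hk : 2 ≤ k) (a : ℤ) :
    APFree k (↑({a} : Finset ℤ) : Set ℤ) := by
  rw [apFree_iff]
  intro x d hd hall
  have h0 := hall 0 (by omega)
  have h1 := hall 1 (by omega)
  simp only [Finset.coe_singleton, Set.mem_singleton_iff] at h0 h1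
  push_cast at h0 h1
  omega

lemma fAP_eq_card (s : ℕ) (A : Finset ℤ) :
    fAP s A = (A.powerset.filter (fun P => ∃ x d : ℤ, d ≠ 0 ∧ P = AP s x d)).card := by
  classical
  unfold fAP
  have hiff : ∀ P : Finset ℤ, (P ⊆ A ∧ ∃ x d : ℤ, d ≠ 0 ∧ P = AP s x d) ↔
      P ∈ A.powerset.filter (fun P => ∃ x d : ℤ, d ≠ 0 ∧ P = AP s x d) := by
    intro P
    rw [Finset.mem_filter, Finset.mem_powerset]
  rw [Nat.card_congr (Equiv.subtypeEquivRight hiff), Nat.card_eq_finsetCard]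

lemma fAP_le (s : ℕ) (A : Finset ℤ) : fAP s A ≤ 2 ^ A.card := by
  rw [fAP_eq_card]
  calc (A.powerset.filter (fun P => ∃ x d : ℤ, d ≠ 0 ∧ P = AP s x d)).card
      ≤ A.powerset.card := Finset.card_le_card (Finset.filter_subset _ _)
  _ = 2 ^ A.card := Finset.card_powerset A

lemma le_fAP {s : ℕ} {A : Finset ℤ} (F : Finset (Finset ℤ))
    (hF : ∀ P ∈ F, P ⊆ A ∧ ∃ x d : ℤ, d ≠ 0 ∧ P = AP s x d) :
    F.card ≤ fAP s A := by
  rw [fAP_eq_card]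
  apply Finset.card_le_card
  intro P hP
  rw [Finset.mem_filter, Finset.mem_powerset]
  exact hF P hP

lemma le_fsk {s k n : ℕ} (A : Finset ℤ) (hcard : A.card = n) (hfree : APFree k (↑A : Set ℤ)) :
    fAP s A ≤ fsk s k n := by
  apply le_csSup
  · refine ⟨2 ^ n, ?_⟩
    rintro m ⟨A', hA', hfree', rfl⟩
    calc fAP s A' ≤ 2 ^ A'.card := fAP_le s A'
    _ = 2 ^ n := by rw [hA']
  · exact ⟨A, hcard, hfree, rfl⟩

lemma rk_le {k n : ℕ} (hk : 1 ≤ k) : rk k n ≤ n := by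
  apply csSup_le
  · exact ⟨0, ⟨∅, by simp, apFree_empty hk, by simp⟩⟩
  · rintro m ⟨A, hA, _, rfl⟩
    calc A.card ≤ (Finset.Icc 1 (n:ℤ)).card := Finset.card_le_card hA
    _ = n := by rw [Int.card_Icc]; simp

lemma rk_bddAbove (k n : ℕ) :
    BddAbove {m | ∃ A : Finset ℤ, A ⊆ Finset.Icc 1 (n : ℤ) ∧ APFree k ↑A ∧ A.card = m} := by
  refine ⟨n, ?_⟩
  rintro m ⟨A, hA, _, rfl⟩
  calc A.card ≤ (Finset.Icc 1 (n:ℤ)).card := Finset.card_le_card hA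
  _ = n := by rw [Int.card_Icc]; simp

lemma rk_witness {k n : ℕ} (hk : 1 ≤ k) :
    ∃ B : Finset ℤ, B ⊆ Finset.Icc 1 (n : ℤ) ∧ APFree k (↑B : Set ℤ) ∧ B.card = rk k n := by
  have hne : {m | ∃ A : Finset ℤ, A ⊆ Finset.Icc 1 (n : ℤ) ∧ APFree k ↑A ∧ A.card = m}.Nonempty :=
    ⟨0, ∅, by simp, apFree_empty hk, by simp⟩
  have := Nat.sSup_mem hne (rk_bddAbove k n)
  exact this

lemma rk_pos {k n : ℕ} (hk : 2 ≤ k) (hn : 1 ≤ n) : 1 ≤ rk k n := by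
  apply le_csSup (rk_bddAbove k n)
  refine ⟨{1}, ?_, apFree_singleton hk 1, by simp⟩
  simp only [Finset.singleton_subset_iff, Finset.mem_Icc]
  constructor
  · norm_num
  · exact_mod_cast hn
/-! ### The main construction -/

lemma geom_sep {WB G : ℤ} {i i' : ℕ} {u u' : ℤ} (hWB : 1 ≤ WB) (hGW : WB ≤ G)
    (hu : 0 ≤ u) (huW : u < WB) (hu' : 0 ≤ u') (huW' : u' < WB)
    (he : G * 4 ^ i + u = G * 4 ^ i' + u') : i = i' := by
  have hG0 : (0:ℤ) < G := by linarith
  by_contra hne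
  rcases Ne.lt_or_gt hne with h | h
  · have h4 : (4:ℤ) ^ (i + 1) ≤ 4 ^ i' := four_pow_mono (by omega)
    have h4' : (4:ℤ) ^ (i+1) = 4 ^ i * 4 := pow_succ 4 i
    have hp := four_pow_pos i
    have : G * 4 ^ (i+1) ≤ G * 4 ^ i' := mul_le_mul_of_nonneg_left h4 (le_of_lt hG0)
    nlinarith
  · have h4 : (4:ℤ) ^ (i' + 1) ≤ 4 ^ i := four_pow_mono (by omega)
    have h4' : (4:ℤ) ^ (i'+1) = 4 ^ i' * 4 := pow_succ 4 i'
    have hp := four_pow_pos i'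
    have : G * 4 ^ (i'+1) ≤ G * 4 ^ i := mul_le_mul_of_nonneg_left h4 (le_of_lt hG0)
    nlinarith

lemma sum_ite_range (N m a b : ℕ) (h : m ≤ N) :
    ∑ i ∈ Finset.range N, (if i < m then a else b) = m * a + (N - m) * b := by
  classical
  rw [Finset.sum_ite]
  have h1 : (Finset.range N).filter (fun i => i < m) = Finset.range m := by
    ext i
    simp only [Finset.mem_filter, Finset.mem_range]
    omega
  have h2 : ((Finset.range N).filter (fun i => ¬ i < m)).card = N - m := by
    have := Finset.card_filter_add_card_filter_not (s := Finset.range N)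
      (p := fun i => i < m)
    rw [h1] at this
    simp only [Finset.card_range] at this
    omega
  rw [h1, Finset.sum_const, Finset.sum_const, Finset.card_range, smul_eq_mul, smul_eq_mul, h2]

lemma geom_pos_sep {G WB : ℤ} (hWB : 1 ≤ WB) (hGW : WB ≤ G) {i i' : ℕ} (h : i < i') :
    G * 4 ^ i + WB ≤ G * 4 ^ i' := by
  have hG0 : (0:ℤ) < G := by linarith
  have h4 : (4:ℤ) ^ (i+1) ≤ 4 ^ i' := four_pow_mono (by omega)
  have hle : G * 4^(i+1) ≤ G * 4^i' := mul_le_mul_of_nonneg_left h4 (le_of_lt hG0)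
  have e : (4:ℤ)^(i+1) = 4^i*4 := pow_succ 4 i
  have hp := four_pow_pos i
  nlinarith

set_option maxHeartbeats 2000000 in
lemma construction {k s n : ℕ} (hs : 3 ≤ s) (hsk : s < k) (hn : 100 * s ^ 4 ≤ n) :
    ∃ rh W Tc Qc m : ℕ,
      1 ≤ rh ∧ 1 ≤ W ∧
      2 * s ^ 2 * W ≤ n ∧ n ≤ 4 * s ^ 2 * W ∧
      rk k n * W ≤ 2 * n * rh ∧ rh ≤ W ∧
      Tc ≤ 8 * (s - 1) * W ∧
      rh ^ 2 * ((s - 1) * rh) ^ (s - 2) ≤ Qc * Tc ^ (s - 2) ∧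
      n ≤ 2 * m * (s ^ 2 * rh) ∧
      m * Qc ≤ fsk s k n := by
  classical
  have hk4 : 4 ≤ k := by omega
  have hs2 : 2 ≤ s := by omega
  have hp4 : 1 ≤ s ^ 4 := Nat.one_le_pow _ _ (by omega)
  have hp24 : s ^ 2 ≤ s ^ 4 := Nat.pow_le_pow_right (by omega) (by omega)
  have hn1 : 1 ≤ n := by omega
  have hss : 2 * s ^ 2 ≤ n := by omega
  -- the window width
  set W : ℕ := n / (2 * s ^ 2) with hWdef
  have hW1 : 1 ≤ W := (Nat.one_le_div_iff (by positivity)).2 hss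
  have hWn : W ≤ n := Nat.div_le_self _ _
  have hWle : 2 * s ^ 2 * W ≤ n := by
    have := Nat.div_mul_le_self n (2 * s ^ 2)
    calc 2 * s ^ 2 * W = W * (2 * s ^ 2) := by ring
    _ ≤ n := Nat.div_mul_le_self n (2 * s ^ 2)
  have hWge : n ≤ 4 * s ^ 2 * W := by
    have hdm : 2 * s ^ 2 * W + n % (2 * s ^ 2) = n := by
      rw [hWdef]
      have := Nat.div_add_mod n (2 * s ^ 2)
      linarith [this]
    have hmod : n % (2 * s ^ 2) < 2 * s ^ 2 := Nat.mod_lt _ (by positivity)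
    have hWmul : 2 * s ^ 2 * 1 ≤ 2 * s ^ 2 * W := Nat.mul_le_mul_left _ hW1
    linarith
  -- the extremal set and its dense window
  set r : ℕ := rk k n with hrdef
  have hr1 : 1 ≤ r := rk_pos (by omega) hn1
  have hrn : r ≤ n := rk_le (by omega)
  obtain ⟨B, hBsub, hBfree, hBcard⟩ := rk_witness (k := k) (n := n) (by omega)
  obtain ⟨x₀, hx₀⟩ := exists_dense_window B n W hW1 hWn hBsub
  set Bh : Finset ℤ := (B.filter (fun y => x₀ ≤ y ∧ y < x₀ + (W : ℤ))).image (· + (-x₀)) with hBhdef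
  set rh : ℕ := Bh.card with hrhdef
  have hrhcard : rh = (B.filter (fun y => x₀ ≤ y ∧ y < x₀ + (W : ℤ))).card := by
    rw [hrhdef, hBhdef]
    exact Finset.card_image_of_injective _ (add_left_injective _)
  have hcapW : r * W ≤ 2 * n * rh := by
    calc r * W = B.card * W := by rw [hBcard, hrdef]
    _ ≤ (B.filter (fun y => x₀ ≤ y ∧ y < x₀ + (W : ℤ))).card * (2 * n) := hx₀
    _ = 2 * n * (B.filter (fun y => x₀ ≤ y ∧ y < x₀ + (W : ℤ))).card := by ring
    _ = 2 * n * rh := by rw [hrhcard]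
  have hrh1 : 1 ≤ rh := by nlinarith
  have hBhsub : ∀ y ∈ Bh, 0 ≤ y ∧ y < (W:ℤ) := by
    intro y hy
    rw [hBhdef, Finset.mem_image] at hy
    obtain ⟨z, hz, rfl⟩ := hy
    rw [Finset.mem_filter] at hz
    omega
  have hrhW : rh ≤ W := by
    rw [hrhdef]
    calc Bh.card ≤ (Finset.Ico (0:ℤ) (W:ℤ)).card := by
          apply Finset.card_le_card
          intro y hy
          rw [Finset.mem_Ico]
          exact hBhsub y hy
    _ = W := by rw [Int.card_Ico]; simp
  have hBhfree : APFree k (↑Bh : Set ℤ) := by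
    rw [hBhdef]
    have h1 : APFree k (↑(B.filter (fun y => x₀ ≤ y ∧ y < x₀ + (W : ℤ))) : Set ℤ) :=
      APFree.mono (by
        intro y hy
        simp only [Finset.coe_filter, Set.mem_setOf_eq] at hy
        exact Finset.mem_coe.2 hy.1) hBfree
    exact APFree.translate h1 (-x₀)
  -- the spaced union B*
  set sm1 : ℕ := s - 1 with hsm1def
  have hsm1two : 2 ≤ sm1 := by omega
  have hWZ1 : (1:ℤ) ≤ (W:ℤ) := by exact_mod_cast hW1
  set Bstar : Finset ℤ := (Finset.range sm1).biUnion
      (fun j => Bh.image (· + (j : ℤ) * (5 * (W:ℤ)))) with hBstardef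
  have hBstarfree : APFree k (↑Bstar : Set ℤ) := by
    rw [hBstardef]
    exact blocks_free (by omega) (fun _ => Bh) sm1 (by omega) (W:ℤ) (5 * (W:ℤ))
      (by positivity) (by linarith)
      (fun j _ y hy => ⟨by linarith [(hBhsub y hy).1], by linarith [(hBhsub y hy).2]⟩)
      (fun j _ => hBhfree)
  have hBstarcard : Bstar.card = sm1 * rh := by
    rw [hBstardef]
    rw [card_biUnion_translates (fun _ => Bh) (fun j => (j:ℤ) * (5 * (W:ℤ))) (W:ℤ) sm1
      (fun i _ y hy => hBhsub y hy)
      (fun i i' hii' _ => by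
        show (i:ℤ) * (5 * (W:ℤ)) + (W:ℤ) ≤ (i':ℤ) * (5 * (W:ℤ))
        have h1 : ((i:ℤ) + 1) ≤ (i':ℤ) := by exact_mod_cast hii'
        have h2 : ((i:ℤ) + 1) * (5 * (W:ℤ)) ≤ (i':ℤ) * (5 * (W:ℤ)) :=
          mul_le_mul_of_nonneg_right h1 (by positivity)
        linarith)]
    rw [Finset.sum_const, Finset.card_range, smul_eq_mul]
  have hBstarbounds : ∀ y ∈ Bstar, 0 ≤ y ∧ y ≤ 5 * (sm1:ℤ) * W := by
    intro y hy
    rw [hBstardef, Finset.mem_biUnion] at hy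
    obtain ⟨j, hj, hy⟩ := hy
    rw [Finset.mem_image] at hy
    obtain ⟨z, hz, rfl⟩ := hy
    have hb := hBhsub z hz
    have hjZ : (j:ℤ) ≤ (sm1:ℤ) - 1 := by
      have : (j:ℤ) < (sm1:ℤ) := by exact_mod_cast Finset.mem_range.1 hj
      linarith
    have hjZ0 : 0 ≤ (j:ℤ) := Int.natCast_nonneg j
    constructor
    · have : 0 ≤ (j:ℤ) * (5 * (W:ℤ)) := by positivity
      linarith
    · have h2 : (j:ℤ) * (5 * (W:ℤ)) ≤ ((sm1:ℤ) - 1) * (5 * (W:ℤ)) :=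
        mul_le_mul_of_nonneg_right hjZ (by positivity)
      linarith
  -- the translate space T
  set T : Finset ℤ := Finset.Icc (-(6 * (sm1:ℤ) * W)) ((sm1:ℤ) * W) with hTdef
  have hsm1W1 : 1 ≤ sm1 * W := by
    calc 1 = 1 * 1 := by ring
    _ ≤ sm1 * W := Nat.mul_le_mul (by omega) hW1
  have hTcard : T.card = 7 * (sm1 * W) + 1 := by
    rw [hTdef, Int.card_Icc]
    have he : (sm1:ℤ) * W + 1 - (-(6 * (sm1:ℤ) * W)) = ((7 * (sm1 * W) + 1 : ℕ) : ℤ) := by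
      push_cast; ring
    rw [he, Int.toNat_natCast]
  have hTle : T.card ≤ 8 * (sm1 * W) := by omega
  have hTne : T.Nonempty := ⟨0, by
    rw [hTdef, Finset.mem_Icc]
    constructor
    · have : (0:ℤ) ≤ 6 * (sm1:ℤ) * W := by positivity
      linarith
    · positivity⟩
  -- compatibility of middle values with T
  have hcompat : ∀ j : ℕ, 2 ≤ j → j < s → ∀ p ∈ Bh ×ˢ Bh, ∀ b ∈ Bstar,
      p.1 + (j:ℤ) * (p.2 - p.1) - b ∈ T := by
    intro j hj2 hjs p hp b hb
    rw [Finset.mem_product] at hp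
    have hb1 := hBhsub p.1 hp.1
    have hb2 := hBhsub p.2 hp.2
    have hbb := hBstarbounds b hb
    have hjZ1 : (2:ℤ) ≤ (j:ℤ) := by exact_mod_cast hj2
    have hjZ2 : (j:ℤ) ≤ (sm1:ℤ) := by
      have : j ≤ sm1 := by omega
      exact_mod_cast this
    have hsm1Z : (2:ℤ) ≤ (sm1:ℤ) := by exact_mod_cast hsm1two
    rw [hTdef, Finset.mem_Icc]
    have u1 : 0 ≤ ((j:ℤ) - 1) * p.1 := mul_nonneg (by linarith) hb1.1
    have u2 : (j:ℤ) * p.2 ≤ (j:ℤ) * ((W:ℤ) - 1) :=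
      mul_le_mul_of_nonneg_left (by linarith [hb2.2]) (by linarith)
    have u3 : (j:ℤ) * ((W:ℤ) - 1) ≤ (sm1:ℤ) * ((W:ℤ) - 1) :=
      mul_le_mul_of_nonneg_right hjZ2 (by linarith)
    have u4 : 0 ≤ (j:ℤ) * p.2 := mul_nonneg (by linarith) hb2.1
    have l1 : ((j:ℤ) - 1) * p.1 ≤ ((j:ℤ) - 1) * ((W:ℤ) - 1) :=
      mul_le_mul_of_nonneg_left (by linarith [hb1.2]) (by linarith)
    have l2 : ((j:ℤ) - 1) * ((W:ℤ) - 1) ≤ (sm1:ℤ) * ((W:ℤ) - 1) :=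
      mul_le_mul_of_nonneg_right (by linarith) (by linarith)
    constructor
    · linarith
    · linarith
  -- the captured pair set
  obtain ⟨τ, hτT, Q, hQsub, hQmid, hQcard⟩ :=
    capture_chain Bh Bstar T hTne s hcompat (s - 2) (by omega)
  have hQcard' : rh ^ 2 * (sm1 * rh) ^ (s - 2) ≤ Q.card * T.card ^ (s - 2) := by
    rw [hrhdef, ← hBstarcard]
    exact hQcard
  -- layers
  have hsZ : (3:ℤ) ≤ (s:ℤ) := by exact_mod_cast hs
  have hsm1Z : (sm1:ℤ) = (s:ℤ) - 1 := by
    rw [hsm1def]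
    push_cast [Nat.cast_sub (by omega : 1 ≤ s)]
    ring
  set Pz : ℤ := 24 * (s:ℤ) * W + 1 with hPdef
  set Mz : ℤ := 6 * (s:ℤ) * W with hMdef
  have hMz0 : 0 ≤ Mz := by rw [hMdef]; positivity
  have hsWf1 : (s:ℤ) ≤ (s:ℤ) * W := le_mul_of_one_le_right (by positivity) hWZ1
  have hsZ1 : (1:ℤ) ≤ (s:ℤ) := by linarith only [hsZ]
  have hWsf : (W:ℤ) ≤ (s:ℤ) * W := by
    calc (W:ℤ) = 1 * W := by ring
    _ ≤ (s:ℤ) * W := mul_le_mul_of_nonneg_right hsZ1 (by positivity)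
  have hsWle : (s:ℤ) * W ≤ (s:ℤ)^2 * W := by
    calc (s:ℤ)*W = 1*((s:ℤ)*W) := by ring
    _ ≤ (s:ℤ)*((s:ℤ)*W) := mul_le_mul_of_nonneg_right hsZ1 (by positivity)
    _ = (s:ℤ)^2*W := by ring
  set L : ℕ → Finset ℤ := fun j => if j < 2 then Bh else Bstar.image (· + τ j) with hLdef
  have hLbound : ∀ j, j < s → ∀ y ∈ L j, -Mz ≤ y ∧ y ≤ Mz := by
    intro j hj y hy
    simp only [hLdef] at hy
    by_cases h2 : j < 2
    · rw [if_pos h2] at hy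
      have hb := hBhsub y hy
      constructor
      · linarith only [hMz0, hb.1]
      · rw [hMdef]; linarith only [hb.2, hWsf, hsWf1, hsZ]
    · rw [if_neg h2] at hy
      simp only [Finset.mem_image] at hy
      obtain ⟨z, hz, rfl⟩ := hy
      have hzb := hBstarbounds z hz
      have hτ := hτT j (by omega) (by omega)
      rw [hTdef, Finset.mem_Icc] at hτ
      have hsm1le : (sm1:ℤ) * W ≤ (s:ℤ) * W := by
        rw [hsm1Z]
        have h9 : ((s:ℤ)-1) * W ≤ (s:ℤ)*W := mul_le_mul_of_nonneg_right (by linarith only [hsZ]) (by positivity)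
        linarith only [h9]
      rw [hMdef]
      constructor
      · linarith only [hzb.1, hτ.1, hsm1le]
      · linarith only [hzb.2, hτ.2, hsm1le]
  have hLfree : ∀ j, j < s → APFree k (↑(L j) : Set ℤ) := by
    intro j _
    simp only [hLdef]
    by_cases h2 : j < 2
    · rw [if_pos h2]; exact hBhfree
    · rw [if_neg h2]; exact APFree.translate hBstarfree (τ j)
  set Bt : Finset ℤ := (Finset.range s).biUnion (fun j => (L j).image (· + (j:ℤ) * Pz)) with hBtdef
  have hPMz : 4 * Mz + 1 ≤ Pz := by rw [hPdef, hMdef]; linarith only []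
  have hBtfree : APFree k (↑Bt : Set ℤ) := by
    rw [hBtdef]
    exact blocks_free (by omega) L s (by omega) Mz Pz hMz0 hPMz hLbound hLfree
  have hLcard : ∀ j, j < s → (L j).card = if j < 2 then rh else sm1 * rh := by
    intro j _
    simp only [hLdef]
    by_cases h2 : j < 2
    · rw [if_pos h2, if_pos h2, hrhdef]
    · rw [if_neg h2, if_neg h2, Finset.card_image_of_injective _ (add_left_injective _),
        hBstarcard]
  have hBtcard : Bt.card = 2 * rh + (s - 2) * (sm1 * rh) := by
    rw [hBtdef]
    rw [card_biUnion_translates' (-Mz) L (fun j => (j:ℤ) * Pz) (2 * Mz + 1) s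
      (fun i hi y hy => ⟨(hLbound i hi y hy).1, by linarith only [(hLbound i hi y hy).2]⟩)
      (fun i i' hii' _ => by
        show (i:ℤ) * Pz + (2 * Mz + 1) ≤ (i':ℤ) * Pz
        have h1 : (i:ℤ) + 1 ≤ (i':ℤ) := by exact_mod_cast hii'
        have h2 : ((i:ℤ)+1) * Pz ≤ (i':ℤ) * Pz :=
          mul_le_mul_of_nonneg_right h1 (by rw [hPdef]; positivity)
        linarith only [h2, hPMz, hMz0])]
    calc ∑ j ∈ Finset.range s, (L j).card
        = ∑ j ∈ Finset.range s, (if j < 2 then rh else sm1*rh) :=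
          Finset.sum_congr rfl (fun j hj => hLcard j (Finset.mem_range.1 hj))
    _ = 2 * rh + (s-2)*(sm1*rh) := by
          rw [sum_ite_range s 2 rh (sm1*rh) (by omega)]
  -- number of copies
  set mm : ℕ := n / (s ^ 2 * rh) with hmmdef
  have hs21 : 1 ≤ s ^ 2 := Nat.one_le_pow _ _ (by omega)
  have hs2rh1 : 1 ≤ s ^ 2 * rh := by
    calc 1 = 1 * 1 := by ring
    _ ≤ s^2 * rh := Nat.mul_le_mul hs21 hrh1
  have hs2rhW : s ^ 2 * rh ≤ s ^ 2 * W := Nat.mul_le_mul_left _ hrhW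
  have h2s2rhn : 2 * (s ^ 2 * rh) ≤ n := by
    calc 2 * (s^2*rh) ≤ 2 * (s^2*W) := Nat.mul_le_mul_left _ hs2rhW
    _ = 2 * s^2 * W := by ring
    _ ≤ n := hWle
  have hmm1 : 1 ≤ mm := (Nat.one_le_div_iff (by omega)).2 (by omega)
  have hmmle : mm * (s^2*rh) ≤ n := by
    rw [hmmdef]
    exact Nat.div_mul_le_self _ _
  have hmmge : n ≤ 2 * mm * (s^2*rh) := by
    have hdm : (s^2*rh) * mm + n % (s^2*rh) = n := by rw [hmmdef]; exact Nat.div_add_mod n _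
    have hmod : n % (s^2*rh) < s^2*rh := Nat.mod_lt _ (by omega)
    have e2 : (s^2*rh) * 1 ≤ (s^2*rh) * mm := Nat.mul_le_mul_left _ hmm1
    have e3 : 2 * mm * (s^2*rh) = 2 * ((s^2*rh) * mm) := by ring
    linarith only [hdm, hmod, e2, e3]
  have hcB : Bt.card ≤ s ^ 2 * rh := by
    rw [hBtcard]
    have h1 : (s-2) * sm1 + 2 ≤ s^2 := by
      rw [hsm1def]
      zify [show (2:ℕ) ≤ s by omega, show (1:ℕ) ≤ s by omega]
      linarith only [hsZ]
    calc 2*rh + (s-2)*(sm1*rh) = ((s-2)*sm1 + 2) * rh := by ring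
    _ ≤ s^2 * rh := Nat.mul_le_mul_right _ h1
  have hmcBn : mm * Bt.card ≤ n := le_trans (Nat.mul_le_mul_left _ hcB) hmmle
  set q : ℕ := n - mm * Bt.card with hqdef
  have hqn : mm * Bt.card + q = n := by rw [hqdef]; exact Nat.add_sub_cancel' hmcBn
  obtain ⟨b0, hb0⟩ := Finset.card_pos.1 (show 0 < Bh.card by omega)
  set WB : ℤ := 40 * (s:ℤ)^2 * W with hWBdef
  have hWB1 : (1:ℤ) ≤ WB := by
    rw [hWBdef]
    have hsq9 : (9:ℤ) ≤ (s:ℤ)^2 := by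
      have h9 : (3:ℤ)*3 ≤ (s:ℤ)*(s:ℤ) := mul_le_mul hsZ hsZ (by norm_num) (by linarith only [hsZ])
      calc (9:ℤ) = 3*3 := by norm_num
      _ ≤ (s:ℤ)*(s:ℤ) := h9
      _ = (s:ℤ)^2 := by ring
    calc (1:ℤ) = 1 * 1 := by ring
    _ ≤ (40*(s:ℤ)^2) * W := by
        apply mul_le_mul (by linarith only [hsq9]) hWZ1 (by norm_num) (by positivity)
    _ = 40*(s:ℤ)^2*W := by ring
  have hBtb : ∀ y ∈ Bt, 0 ≤ y + Mz ∧ y + Mz < WB := by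
    intro y hy
    rw [hBtdef, Finset.mem_biUnion] at hy
    obtain ⟨j, hjmem, hy⟩ := hy
    rw [Finset.mem_image] at hy
    obtain ⟨v, hv, rfl⟩ := hy
    have hjs := Finset.mem_range.1 hjmem
    have hvb := hLbound j hjs v hv
    have hjZ : (j:ℤ) ≤ (s:ℤ) - 1 := by
      have : (j:ℤ) < (s:ℤ) := by exact_mod_cast hjs
      linarith
    have hjZ0 : (0:ℤ) ≤ (j:ℤ) := Int.natCast_nonneg j
    have hPz0 : (0:ℤ) ≤ Pz := by rw [hPdef]; positivity
    have hjP : (j:ℤ) * Pz ≤ ((s:ℤ)-1) * Pz := mul_le_mul_of_nonneg_right hjZ hPz0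
    have hjP0 : 0 ≤ (j:ℤ) * Pz := mul_nonneg hjZ0 hPz0
    constructor
    · linarith only [hvb.1, hjP0, hMz0]
    · rw [hWBdef, hMdef, hPdef]
      rw [hPdef] at hjP
      rw [hMdef] at hvb
      linarith only [hvb.2, hjP, hsWf1, hsWle, hWsf, hWZ1, hsZ]
  set C : ℕ → Finset ℤ := fun i => if i < mm then Bt.image (· + Mz) else {b0 + Mz} with hCdef
  have hCb : ∀ i, i < mm + q → ∀ y ∈ C i, 0 ≤ y ∧ y < WB := by
    intro i _ y hy
    simp only [hCdef] at hy
    by_cases h2 : i < mm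
    · rw [if_pos h2, Finset.mem_image] at hy
      obtain ⟨z, hz, rfl⟩ := hy
      exact hBtb z hz
    · rw [if_neg h2, Finset.mem_singleton] at hy
      subst hy
      have hb := hBhsub b0 hb0
      constructor
      · linarith only [hMz0, hb.1]
      · rw [hMdef, hWBdef]; linarith only [hb.2, hWsf, hsWle, hsWf1, hWZ1, hsZ]
  have hCfree : ∀ i, i < mm + q → APFree k (↑(C i) : Set ℤ) := by
    intro i _
    simp only [hCdef]
    by_cases h2 : i < mm
    · rw [if_pos h2]; exact APFree.translate hBtfree Mz
    · rw [if_neg h2]; exact apFree_singleton (by omega) _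
  set G : ℤ := (2 * (k:ℤ) + 2) * WB + 1 with hGdef
  have hkZ4 : (4:ℤ) ≤ (k:ℤ) := by exact_mod_cast hk4
  have hGW : WB ≤ G := by
    rw [hGdef]
    have hWB0 : 0 ≤ WB := by linarith only [hWB1]
    have h1 : 1 * WB ≤ (2*(k:ℤ)+2) * WB := mul_le_mul_of_nonneg_right (by linarith only [hkZ4]) hWB0
    linarith only [h1]
  set A : Finset ℤ := (Finset.range (mm+q)).biUnion (fun i => (C i).image (· + G * 4 ^ i))
    with hAdef
  have hAfree : APFree k (↑A : Set ℤ) := by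
    rw [hAdef]
    exact geom_free (by omega) C (mm+q) WB G hWB1 (by rw [hGdef]) hCb hCfree
  have hCcard : ∀ i ∈ Finset.range (mm+q), (C i).card = if i < mm then Bt.card else 1 := by
    intro i _
    simp only [hCdef]
    by_cases h2 : i < mm
    · rw [if_pos h2, if_pos h2, Finset.card_image_of_injective _ (add_left_injective _)]
    · rw [if_neg h2, if_neg h2, Finset.card_singleton]
  have hAcard : A.card = n := by
    rw [hAdef]
    rw [card_biUnion_translates C (fun i => G * 4 ^ i) WB (mm+q) hCb
      (fun i i' hii' _ => geom_pos_sep hWB1 hGW hii')]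
    rw [Finset.sum_congr rfl hCcard, sum_ite_range (mm+q) mm _ 1 (by omega)]
    have he : mm + q - mm = q := by omega
    rw [he, mul_one]
    exact hqn
  -- the family of s-APs inside A
  have hQsub' : ∀ p ∈ Q, p.1 ∈ Bh ∧ p.2 ∈ Bh := by
    intro p hp
    have := hQsub hp
    rwa [Finset.mem_product] at this
  have hdpos : ∀ p ∈ Q, 0 < p.2 - p.1 + Pz := by
    intro p hp
    obtain ⟨h1, h2⟩ := hQsub' p hp
    have hb1 := hBhsub _ h1
    have hb2 := hBhsub _ h2
    rw [hPdef]
    linarith only [hb1.1, hb1.2, hb2.1, hb2.2, hsWf1, hWsf, hsZ, hWZ1]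
  have hterm : ∀ i, i < mm → ∀ p ∈ Q, ∀ l, l < s →
      (p.1 + Mz + G * 4 ^ i) + (l:ℤ) * (p.2 - p.1 + Pz) ∈ A := by
    intro i him p hp l hls
    have hvL : p.1 + (l:ℤ) * (p.2 - p.1) ∈ L l := by
      simp only [hLdef]
      by_cases h2 : l < 2
      · rw [if_pos h2]
        interval_cases l
        · simpa using (hQsub' p hp).1
        · have he1 : p.1 + ((1:ℕ):ℤ) * (p.2 - p.1) = p.2 := by push_cast; ring
          rw [he1]
          exact (hQsub' p hp).2
      · rw [if_neg h2]
        rw [Finset.mem_image]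
        exact ⟨p.1 + (l:ℤ)*(p.2-p.1) - τ l, hQmid p hp l (by omega) (by omega), by ring⟩
    have hvBt : p.1 + (l:ℤ) * (p.2 - p.1) + (l:ℤ) * Pz ∈ Bt := by
      rw [hBtdef, Finset.mem_biUnion]
      exact ⟨l, Finset.mem_range.2 hls, Finset.mem_image.2 ⟨_, hvL, rfl⟩⟩
    rw [hAdef, Finset.mem_biUnion]
    refine ⟨i, Finset.mem_range.2 (by omega), ?_⟩
    rw [Finset.mem_image]
    refine ⟨p.1 + (l:ℤ)*(p.2-p.1) + (l:ℤ)*Pz + Mz, ?_, by ring⟩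
    simp only [hCdef]
    simp only [if_pos him, Finset.mem_image]
    exact ⟨_, hvBt, rfl⟩
  set F : Finset (Finset ℤ) := ((Finset.range mm) ×ˢ Q).image
      (fun z => AP s (z.2.1 + Mz + G * 4 ^ z.1) (z.2.2 - z.2.1 + Pz)) with hFdef
  have hFprop : ∀ P' ∈ F, P' ⊆ A ∧ ∃ x d : ℤ, d ≠ 0 ∧ P' = AP s x d := by
    intro P' hP'
    rw [hFdef, Finset.mem_image] at hP'
    obtain ⟨z, hzmem, rfl⟩ := hP'
    rw [Finset.mem_product, Finset.mem_range] at hzmem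
    constructor
    · rw [AP_subset_finset_iff]
      intro l hls
      exact hterm z.1 hzmem.1 z.2 hzmem.2 l hls
    · exact ⟨_, _, by have := hdpos z.2 hzmem.2; omega, rfl⟩
  have hFcard : F.card = mm * Q.card := by
    rw [hFdef]
    rw [Finset.card_image_of_injOn, Finset.card_product, Finset.card_range]
    rintro ⟨i, b, bb⟩ hz ⟨i', b', bb'⟩ hz' heq
    simp only [Finset.mem_coe, Finset.mem_product, Finset.mem_range] at hz hz'
    have hd1 : 0 < bb - b + Pz := hdpos _ hz.2
    have hd2 : 0 < bb' - b' + Pz := hdpos _ hz'.2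
    obtain ⟨hx, hd⟩ := AP_inj hs2 hd1 hd2 heq
    have hbB := hBhsub b (hQsub' _ hz.2).1
    have hbB' := hBhsub b' (hQsub' _ hz'.2).1
    have hbW : b + Mz < WB := by
      rw [hMdef, hWBdef]; linarith only [hbB.2, hWsf, hsWle, hsWf1, hWZ1, hsZ]
    have hbW' : b' + Mz < WB := by
      rw [hMdef, hWBdef]; linarith only [hbB'.2, hWsf, hsWle, hsWf1, hWZ1, hsZ]
    have hii : i = i' := by
      apply geom_sep hWB1 hGW (u := b + Mz) (u' := b' + Mz)
        (by linarith only [hbB.1, hMz0]) hbW (by linarith only [hbB'.1, hMz0]) hbW'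
      linarith only [hx]
    subst hii
    have hbe : b = b' := by
      linarith only [hx]
    subst hbe
    have hbbe : bb = bb' := by linarith only [hd]
    subst hbbe
    rfl
  have hfinal : mm * Q.card ≤ fsk s k n := by
    calc mm * Q.card = F.card := hFcard.symm
    _ ≤ fAP s A := le_fAP F hFprop
    _ ≤ fsk s k n := le_fsk A hAcard hAfree
  refine ⟨rh, W, T.card, Q.card, mm, hrh1, hW1, hWle, hWge, hcapW, hrhW, ?_, ?_, hmmge, hfinal⟩
  · calc T.card ≤ 8 * (sm1 * W) := hTle
    _ = 8 * (s-1) * W := by rw [hsm1def]; ring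
  · have := hQcard'
    rwa [hsm1def] at this
/-! ### Numerics -/

lemma numeric_aux : ∀ s : ℕ, 3 ≤ s → 16 * s ^ 4 * 16 ^ (s - 2) ≤ 1000000 ^ (s - 2) := by
  intro s hs
  induction s, hs using Nat.le_induction with
  | base => norm_num
  | succ s hs ih =>
    have he : s + 1 - 2 = (s - 2) + 1 := by omega
    rw [he, pow_succ, pow_succ]
    have h1 : (s+1)^4 ≤ 16*s^4 := by
      calc (s+1)^4 ≤ (2*s)^4 := Nat.pow_le_pow_left (by omega) 4
      _ = 16*s^4 := by ring
    calc 16*(s+1)^4*(16^(s-2)*16) ≤ 16*(16*s^4)*(16^(s-2)*16) := by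
          apply Nat.mul_le_mul_right
          exact Nat.mul_le_mul_left _ h1
    _ = (16*s^4*16^(s-2))*256 := by ring
    _ ≤ 1000000^(s-2)*256 := Nat.mul_le_mul_right _ ih
    _ ≤ 1000000^(s-2)*1000000 := Nat.mul_le_mul_left _ (by norm_num)

lemma key_nat (X n r rh W Tc Qc mm s : ℕ) (hs : 3 ≤ s) (hrh : 1 ≤ rh) (hW : 1 ≤ W)
    (hrn : r ≤ n)
    (hWge : n ≤ 4 * s ^ 2 * W)
    (hcap : r * W ≤ 2 * n * rh)
    (hT : Tc ≤ 8 * (s - 1) * W)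
    (hQ : rh ^ 2 * ((s - 1) * rh) ^ (s - 2) ≤ Qc * Tc ^ (s - 2))
    (hmm : n ≤ 2 * mm * (s ^ 2 * rh))
    (hX : mm * Qc ≤ X) :
    r ^ (2 * (s - 2)) * n ^ 2 ≤ X * (1000 * n) ^ (2 * (s - 2)) := by
  have hs1 : 1 ≤ s - 1 := by omega
  set e : ℕ := s - 2 with hedef
  have he1 : 1 ≤ e := by omega
  have hse : s - 1 = e + 1 := by omega
  -- Step A
  have stepA : n * (rh ^ 2 * ((s-1) * rh) ^ e) ≤ X * (2 * s^2 * rh) * Tc ^ e := by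
    calc n * (rh ^ 2 * ((s-1) * rh) ^ e) ≤ n * (Qc * Tc ^ e) := Nat.mul_le_mul_left _ hQ
    _ ≤ (2 * mm * (s^2 * rh)) * (Qc * Tc ^ e) := Nat.mul_le_mul_right _ hmm
    _ = (mm * Qc) * ((2 * (s^2 * rh)) * Tc ^ e) := by ring
    _ ≤ X * ((2 * (s^2 * rh)) * Tc ^ e) := Nat.mul_le_mul_right _ hX
    _ = X * (2 * s^2 * rh) * Tc ^ e := by ring
  have stepA' : n * (rh ^ 2 * ((s-1) * rh) ^ e) ≤ X * (2 * s^2 * rh) * (8 * (s-1) * W) ^ e := by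
    calc n * (rh ^ 2 * ((s-1) * rh) ^ e) ≤ X * (2 * s^2 * rh) * Tc ^ e := stepA
    _ ≤ X * (2 * s^2 * rh) * (8 * (s-1) * W) ^ e :=
        Nat.mul_le_mul_left _ (Nat.pow_le_pow_left hT e)
  -- Step C : cancel (s-1)^e * rh
  have hKpos : 0 < (s-1) ^ e * rh := by
    have h1 : 0 < (s-1)^e := Nat.pow_pos (by omega)
    exact Nat.mul_pos h1 (by omega)
  have stepC : n * rh ^ (e+1) ≤ X * (2 * s^2) * (8 ^ e * W ^ e) := by
    apply Nat.le_of_mul_le_mul_right _ hKpos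
    calc n * rh ^ (e+1) * ((s-1)^e * rh)
        = n * (rh ^ 2 * ((s-1) * rh) ^ e) := by
          rw [mul_pow]; ring
    _ ≤ X * (2 * s^2 * rh) * (8 * (s-1) * W) ^ e := stepA'
    _ = X * (2 * s^2) * (8 ^ e * W ^ e) * ((s-1)^e * rh) := by
          rw [mul_pow, mul_pow]; ring
  -- Step E : cancel W^e
  have hWepos : 0 < W ^ e := Nat.pow_pos (by omega)
  have stepE : n * r ^ (e+1) * W ≤ 2 ^ (e+1) * n ^ (e+1) * X * (2 * s^2) * 8 ^ e := by
    apply Nat.le_of_mul_le_mul_right _ hWepos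
    calc n * r ^ (e+1) * W * W ^ e = n * (r * W) ^ (e+1) := by
          rw [mul_pow, pow_succ]; ring
    _ ≤ n * (2 * n * rh) ^ (e+1) :=
          Nat.mul_le_mul_left _ (Nat.pow_le_pow_left hcap _)
    _ = 2 ^ (e+1) * n ^ (e+1) * (n * rh ^ (e+1)) := by
          rw [mul_pow, mul_pow]; ring
    _ ≤ 2 ^ (e+1) * n ^ (e+1) * (X * (2 * s^2) * (8 ^ e * W ^ e)) :=
          Nat.mul_le_mul_left _ stepC
    _ = 2 ^ (e+1) * n ^ (e+1) * X * (2 * s^2) * 8 ^ e * W ^ e := by ring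
  -- Step F
  have stepF : n ^ 2 * r ^ (e+1) ≤ X * n ^ (e+1) * (16 * s^4 * 16 ^ e) := by
    calc n ^ 2 * r ^ (e+1) = n * (n * r ^ (e+1)) := by ring
    _ ≤ (4 * s^2 * W) * (n * r ^ (e+1)) := Nat.mul_le_mul_right _ hWge
    _ = (4 * s^2) * (n * r ^ (e+1) * W) := by ring
    _ ≤ (4 * s^2) * (2 ^ (e+1) * n ^ (e+1) * X * (2 * s^2) * 8 ^ e) :=
          Nat.mul_le_mul_left _ stepE
    _ = X * n ^ (e+1) * (16 * s^4 * (2 ^ e * 8 ^ e)) := by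
          rw [pow_succ]; ring
    _ = X * n ^ (e+1) * (16 * s^4 * 16 ^ e) := by
          rw [← Nat.mul_pow 2 8 e]
  -- numeric bound
  have stepG : n ^ 2 * r ^ (e+1) ≤ X * n ^ (e+1) * 1000000 ^ e := by
    calc n ^ 2 * r ^ (e+1) ≤ X * n ^ (e+1) * (16 * s^4 * 16 ^ e) := stepF
    _ ≤ X * n ^ (e+1) * 1000000 ^ e := by
          apply Nat.mul_le_mul_left
          rw [hedef]
          exact numeric_aux s hs
  -- conclude
  have h2e : 2 * e = (e+1) + (e-1) := by omega
  calc r ^ (2*e) * n ^ 2 = (n ^ 2 * r ^ (e+1)) * r ^ (e-1) := by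
        rw [h2e, pow_add]; ring
  _ ≤ (X * n ^ (e+1) * 1000000 ^ e) * r ^ (e-1) := Nat.mul_le_mul_right _ stepG
  _ ≤ (X * n ^ (e+1) * 1000000 ^ e) * n ^ (e-1) :=
        Nat.mul_le_mul_left _ (Nat.pow_le_pow_left hrn _)
  _ = X * (1000000 ^ e * n ^ ((e+1) + (e-1))) := by rw [pow_add]; ring
  _ = X * (1000 * n) ^ (2*e) := by
        have hpm : (1000:ℕ) ^ (2*e) = 1000000 ^ e := by
          rw [pow_mul]; norm_num
        rw [mul_pow, ← h2e, hpm]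

theorem fsk_lower_bound' :
    ∃ c : ℝ, 0 < c ∧ ∀ k s : ℕ, 3 ≤ s → s < k →
      ∃ n₀ : ℕ, ∀ n : ℕ, n₀ ≤ n →
        (c * (rk k n : ℝ) / n) ^ (2 * (s - 2)) * (n : ℝ) ^ 2 ≤ (fsk s k n : ℝ) := by
  refine ⟨1/1000, by norm_num, ?_⟩
  intro k s hs hsk
  refine ⟨100 * s ^ 4, ?_⟩
  intro n hn
  obtain ⟨rh, W, Tc, Qc, mm, h1, h2, h3, h4, h5, h6, h7, h8, h9, h10⟩ := construction hs hsk hn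
  have hrn : rk k n ≤ n := rk_le (by omega)
  have hp4 : 1 ≤ s ^ 4 := Nat.one_le_pow _ _ (by omega)
  have hn1 : 1 ≤ n := by omega
  have key := key_nat (fsk s k n) n (rk k n) rh W Tc Qc mm s hs h1 h2 hrn h4 h5 h7 h8 h9 h10
  have hnR : (0:ℝ) < (n:ℝ) := by exact_mod_cast hn1
  have hposE : (0:ℝ) < (1000 * (n:ℝ)) ^ (2*(s-2)) := by positivity
  have e1 : ((1:ℝ)/1000 * (rk k n : ℝ)/(n:ℝ)) ^ (2*(s-2)) * (n:ℝ)^2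
      = ((rk k n : ℝ) ^ (2*(s-2)) * (n:ℝ)^2) / (1000 * (n:ℝ)) ^ (2*(s-2)) := by
    rw [show ((1:ℝ)/1000 * (rk k n : ℝ)/(n:ℝ)) = (rk k n : ℝ)/(1000 * (n:ℝ)) by ring]
    rw [div_pow, div_mul_eq_mul_div]
  rw [e1, div_le_iff₀ hposE]
  exact_mod_cast key

theorem fsk_lower_bound :
    ∃ c : ℝ, 0 < c ∧ ∀ k s : ℕ, 3 ≤ s → s < k →
      ∃ n₀ : ℕ, ∀ n : ℕ, n₀ ≤ n →
        (c * (rk k n : ℝ) / n) ^ (2 * (s - 2)) * (n : ℝ) ^ 2 ≤ (fsk s k n : ℝ) := fsk_lower_bound'
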